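/- If z is a nonzero vector in ℤ²ᵍ that is primitive (the gcd of its coordinates is 1) and the standard symplectic form on ℤ²ᵍ is given, then z can be extended to a symplectic basis of ℤ²ᵍ. -/

import Mathlib

open Matrix

namespace SympExtAux

variable {g : ℕ}

abbrev Jm (g : ℕ) : Matrix (Fin g ⊕ Fin g) (Fin g ⊕ Fin g) ℤ :=
  Matrix.fromBlocks 0 1 (-1) 0

def Good (g : ℕ) (M : Matrix (Fin g ⊕ Fin g) (Fin g ⊕ Fin g) ℤ) : Prop :=
  ∃ N, M * N = 1 ∧ N * M = 1 ∧ Mᵀ * Jm g * M = Jm g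

lemma Good.mul {M N : Matrix (Fin g ⊕ Fin g) (Fin g ⊕ Fin g) ℤ}
    (hM : Good g M) (hN : Good g N) : Good g (M * N) := by
  obtain ⟨M', hM1, hM2, hM3⟩ := hM
  obtain ⟨N', hN1, hN2, hN3⟩ := hN
  refine ⟨N' * M', ?_, ?_, ?_⟩
  · rw [mul_assoc, ← mul_assoc N, hN1, one_mul, hM1]
  · rw [mul_assoc, ← mul_assoc M', hM2, one_mul, hN2]
  · calc (M * N)ᵀ * Jm g * (M * N) = Nᵀ * (Mᵀ * Jm g * M) * N := by
          rw [Matrix.transpose_mul]; noncomm_ring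
      _ = Jm g := by rw [hM3, hN3]

lemma good_J : Good g (Jm g) := by
  have h1 : (Jm g)ᵀ * Jm g = 1 := by
    simp [Jm, Matrix.fromBlocks_transpose, Matrix.fromBlocks_multiply, ← Matrix.fromBlocks_one]
  have h2 : Jm g * (Jm g)ᵀ = 1 := by
    simp [Jm, Matrix.fromBlocks_transpose, Matrix.fromBlocks_multiply, ← Matrix.fromBlocks_one]
  exact ⟨(Jm g)ᵀ, h2, h1, by rw [h1, one_mul]⟩

lemma good_upper (S : Matrix (Fin g) (Fin g) ℤ) (hS : Sᵀ = S) :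
    Good g (Matrix.fromBlocks 1 S 0 1) := by
  refine ⟨Matrix.fromBlocks 1 (-S) 0 1, ?_, ?_, ?_⟩
  · simp [Matrix.fromBlocks_multiply, ← Matrix.fromBlocks_one]
  · simp [Matrix.fromBlocks_multiply, ← Matrix.fromBlocks_one]
  · simp [Jm, Matrix.fromBlocks_transpose, Matrix.fromBlocks_multiply, hS]

lemma good_lower (S : Matrix (Fin g) (Fin g) ℤ) (hS : Sᵀ = S) :
    Good g (Matrix.fromBlocks 1 0 S 1) := by
  refine ⟨Matrix.fromBlocks 1 0 (-S) 1, ?_, ?_, ?_⟩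
  · simp [Matrix.fromBlocks_multiply, ← Matrix.fromBlocks_one]
  · simp [Matrix.fromBlocks_multiply, ← Matrix.fromBlocks_one]
  · simp [Jm, Matrix.fromBlocks_transpose, Matrix.fromBlocks_multiply, hS]

lemma exists_bezout {ι : Type*} [DecidableEq ι] (s : Finset ι) (f : ι → ℤ) :
    ∃ c : ι → ℤ, ∑ i ∈ s, f i * c i = s.gcd f := by
  classical
  induction s using Finset.induction_on with
  | empty => exact ⟨0, by simp⟩
  | @insert a s ha ih =>
    obtain ⟨c, hc⟩ := ih
    refine ⟨Function.update (fun i => Int.gcdB (f a) (s.gcd f) * c i) a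
      (Int.gcdA (f a) (s.gcd f)), ?_⟩
    rw [Finset.sum_insert ha, Finset.gcd_insert, Function.update_self]
    have hsum : ∑ i ∈ s, f i * Function.update (fun i => Int.gcdB (f a) (s.gcd f) * c i) a
        (Int.gcdA (f a) (s.gcd f)) i = Int.gcdB (f a) (s.gcd f) * ∑ i ∈ s, f i * c i := by
      rw [Finset.mul_sum]
      refine Finset.sum_congr rfl fun i hi => ?_
      rw [Function.update_of_ne (by rintro rfl; exact ha hi)]
      ring
    rw [hsum, hc, ← Int.coe_gcd, Int.gcd_eq_gcd_ab]
    ring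

lemma exists_symm_mulVec {m : ℕ} {a y : Fin m → ℤ} (hy : ∑ i, a i * y i = 1) (v : Fin m → ℤ) :
    ∃ S : Matrix (Fin m) (Fin m) ℤ, Sᵀ = S ∧ S *ᵥ a = v := by
  refine ⟨Matrix.of fun i j => v i * y j + y i * v j - (∑ k, v k * a k) * (y i * y j), ?_, ?_⟩
  · ext i j
    simp only [Matrix.transpose_apply, Matrix.of_apply]
    ring
  · have h1 : ∑ j, y j * a j = 1 := by
      rw [← hy]; exact Finset.sum_congr rfl fun j _ => mul_comm _ _
    funext i
    have h2 : (Matrix.of (fun i j => v i * y j + y i * v j -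
        (∑ k, v k * a k) * (y i * y j)) *ᵥ a) i
        = ∑ j, (v i * y j + y i * v j - (∑ k, v k * a k) * (y i * y j)) * a j := rfl
    rw [h2]
    have h3 : ∑ j, (v i * y j + y i * v j - (∑ k, v k * a k) * (y i * y j)) * a j
        = v i * (∑ j, y j * a j) + y i * (∑ j, v j * a j)
          - (∑ k, v k * a k) * (y i * (∑ j, y j * a j)) := by
      rw [Finset.mul_sum, Finset.mul_sum, Finset.mul_sum, ← Finset.sum_add_distrib,
        Finset.mul_sum, ← Finset.sum_sub_distrib]
      exact Finset.sum_congr rfl fun j _ => by ring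
    rw [h3, h1]
    ring

lemma gcd_eq_one_of_isUnit {ι : Type*} {s : Finset ι} {f : ι → ℤ}
    (h : IsUnit (s.gcd f)) : s.gcd f = 1 := by
  rw [← Finset.normalize_gcd]
  exact normalize_eq_one.mpr h

lemma gcd_nonneg' {ι : Type*} {s : Finset ι} {f : ι → ℤ} : 0 ≤ s.gcd f := by
  have h1 : normalize (s.gcd f) = s.gcd f := Finset.normalize_gcd
  rw [← Int.abs_eq_normalize] at h1
  rw [← h1]
  exact abs_nonneg _

lemma gcd_mulVec_eq_one {k : Type*} [Fintype k] [DecidableEq k]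
    {M N : Matrix k k ℤ} (h : N * M = 1) {z : k → ℤ}
    (hz : Finset.univ.gcd z = 1) : Finset.univ.gcd (M *ᵥ z) = 1 := by
  apply gcd_eq_one_of_isUnit
  apply isUnit_of_dvd_one
  rw [← hz]
  apply Finset.dvd_gcd
  intro i _
  have hz' : N *ᵥ (M *ᵥ z) = z := by rw [Matrix.mulVec_mulVec, h, Matrix.one_mulVec]
  have hzi : z i = ∑ j, N i j * (M *ᵥ z) j := by
    conv_lhs => rw [← hz']
    rfl
  rw [hzi]
  exact Finset.dvd_sum fun j _ => Dvd.dvd.mul_left (Finset.gcd_dvd (Finset.mem_univ j)) _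







lemma single_elim (i₀ : Fin g) :
    Sum.elim (Pi.single i₀ (1:ℤ)) 0 = Pi.single (Sum.inl i₀ : Fin g ⊕ Fin g) 1 := by
  funext j
  cases j with
  | inl j => simp [Pi.single_apply, Sum.inl.injEq]
  | inr j => simp [Pi.single_apply]

lemma finish_lemma (g : ℕ) (i₀ : Fin g) (a b : Fin g → ℤ)
    (ha : Finset.univ.gcd a = 1) :
    ∃ G, Good g G ∧ G *ᵥ (Sum.elim a b) = Pi.single (Sum.inl i₀) 1 := by
  obtain ⟨y, hy⟩ := exists_bezout Finset.univ a
  rw [ha] at hy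
  have hy' : ∑ i, y i * a i = 1 := by
    rw [← hy]; exact Finset.sum_congr rfl fun i _ => mul_comm _ _
  obtain ⟨S₁, hS₁s, hS₁⟩ := exists_symm_mulVec hy (y - b)
  obtain ⟨S₂, hS₂s, hS₂⟩ := exists_symm_mulVec hy' (Pi.single i₀ (1:ℤ) - a)
  have hsingle : ∑ i : Fin g, (Pi.single i₀ (1:ℤ) : Fin g → ℤ) i * (Pi.single i₀ (1:ℤ) : Fin g → ℤ) i = 1 := by
    have h : ∀ i : Fin g, (Pi.single i₀ (1:ℤ) : Fin g → ℤ) i * (Pi.single i₀ (1:ℤ) : Fin g → ℤ) i = (Pi.single i₀ (1:ℤ) : Fin g → ℤ) i := by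
      intro i
      rcases eq_or_ne i i₀ with h | h <;> simp [Pi.single_apply, h]
    rw [Finset.sum_congr rfl fun i _ => h i]
    simp
  obtain ⟨S₃, hS₃s, hS₃⟩ := exists_symm_mulVec hsingle (-y)
  have e1 : (Matrix.fromBlocks 1 0 S₁ 1) *ᵥ Sum.elim a b = Sum.elim a y := by
    rw [Matrix.fromBlocks_mulVec]
    simp [hS₁]
  have e2 : (Matrix.fromBlocks 1 S₂ 0 1) *ᵥ Sum.elim a y = Sum.elim (Pi.single i₀ 1) y := by
    rw [Matrix.fromBlocks_mulVec]
    simp [hS₂]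
  have e3 : (Matrix.fromBlocks 1 0 S₃ 1) *ᵥ Sum.elim (Pi.single i₀ 1) y
      = Sum.elim (Pi.single i₀ 1) 0 := by
    rw [Matrix.fromBlocks_mulVec]
    simp [hS₃]
    funext j
    cases j <;> simp [Matrix.one_apply, Pi.single_apply]
  refine ⟨Matrix.fromBlocks 1 0 S₃ 1 * (Matrix.fromBlocks 1 S₂ 0 1 * Matrix.fromBlocks 1 0 S₁ 1),
    (good_lower S₃ hS₃s).mul ((good_upper S₂ hS₂s).mul (good_lower S₁ hS₁s)), ?_⟩
  rw [← Matrix.mulVec_mulVec, ← Matrix.mulVec_mulVec, e1, e2, e3, single_elim]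






lemma main_lemma (g : ℕ) (i₀ : Fin g) :
    ∀ (n : ℕ) (z : Fin g ⊕ Fin g → ℤ), Finset.univ.gcd z = 1 →
      (Finset.univ.gcd (z ∘ Sum.inl)).natAbs ≤ n →
      ∃ G, Good g G ∧ G *ᵥ z = Pi.single (Sum.inl i₀) 1 := by
  intro n
  induction n with
  | zero =>
    intro z hz hd
    have hd0 : Finset.univ.gcd (z ∘ Sum.inl) = 0 :=
      Int.natAbs_eq_zero.mp (Nat.le_zero.mp hd)
    have ha0 : ∀ i, z (Sum.inl i) = 0 := fun i =>
      Finset.gcd_eq_zero_iff.mp hd0 i (Finset.mem_univ i)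
    have hb : Finset.univ.gcd (z ∘ Sum.inr) = 1 := by
      apply gcd_eq_one_of_isUnit
      apply isUnit_of_dvd_one
      rw [← hz]
      apply Finset.dvd_gcd
      rintro (i | i) _
      · rw [ha0 i]; exact dvd_zero _
      · exact Finset.gcd_dvd (Finset.mem_univ i)
    obtain ⟨G', hG', hG'v⟩ := finish_lemma g i₀ (z ∘ Sum.inr) 0 hb
    have hJz : Jm g *ᵥ z = Sum.elim (z ∘ Sum.inr) 0 := by
      conv_lhs => rw [← Sum.elim_comp_inl_inr z]
      rw [Jm, Matrix.fromBlocks_mulVec]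
      have h0 : z ∘ Sum.inl = 0 := funext ha0
      simp [Sum.elim_comp_inl, Sum.elim_comp_inr, h0]
    refine ⟨G' * Jm g, hG'.mul good_J, ?_⟩
    rw [← Matrix.mulVec_mulVec, hJz, hG'v]
  | succ n ih =>
    intro z hz hd
    by_cases hle : (Finset.univ.gcd (z ∘ Sum.inl)).natAbs ≤ n
    · exact ih z hz hle
    have hd' : (Finset.univ.gcd (z ∘ Sum.inl)).natAbs = n + 1 := by omega
    set d := Finset.univ.gcd (z ∘ Sum.inl) with hdd
    have hdnn : 0 ≤ d := gcd_nonneg'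
    have hdn : d = (n : ℤ) + 1 := by
      have := Int.natAbs_of_nonneg hdnn
      omega
    by_cases h1 : d = 1
    · obtain ⟨G, hG, hGv⟩ := finish_lemma g i₀ (z ∘ Sum.inl) (z ∘ Sum.inr)
        (by rw [← hdd]; exact h1)
      refine ⟨G, hG, ?_⟩
      conv_lhs => rw [← Sum.elim_comp_inl_inr z]
      exact hGv
    · have hd2 : 2 ≤ d := by omega
      have hne : (Finset.univ : Finset (Fin g)).Nonempty := ⟨i₀, Finset.mem_univ _⟩
      obtain ⟨a₁, ha₁, hga₁⟩ := Finset.extract_gcd (z ∘ Sum.inl) hne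
      obtain ⟨y₁, hy₁⟩ := exists_bezout Finset.univ a₁
      rw [hga₁] at hy₁
      obtain ⟨S, hSs, hS⟩ := exists_symm_mulVec hy₁ (fun i => -(z (Sum.inr i) / d))
      have haf : (z ∘ Sum.inl) = d • a₁ := funext fun i => by
        have := ha₁ i (Finset.mem_univ i)
        simpa using this
      have hSa : S *ᵥ (z ∘ Sum.inl) = fun i => -(d * (z (Sum.inr i) / d)) := by
        rw [haf, Matrix.mulVec_smul, hS]
        funext i
        simp [smul_eq_mul]
      have hz2 : (Matrix.fromBlocks 1 0 S 1 : Matrix (Fin g ⊕ Fin g) (Fin g ⊕ Fin g) ℤ) *ᵥ z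
          = Sum.elim (z ∘ Sum.inl) (fun i => z (Sum.inr i) % d) := by
        conv_lhs => rw [← Sum.elim_comp_inl_inr z]
        rw [Matrix.fromBlocks_mulVec]
        simp only [Sum.elim_comp_inl, Sum.elim_comp_inr, Matrix.one_mulVec,
          Matrix.zero_mulVec, add_zero, zero_add, hSa]
        funext j
        cases j with
        | inl j => rfl
        | inr j =>
          simp only [Sum.elim_inr, Pi.add_apply, Function.comp_apply]
          rw [Int.emod_def]
          ring
      have hz3 : Jm g *ᵥ ((Matrix.fromBlocks 1 0 S 1 : Matrix (Fin g ⊕ Fin g) (Fin g ⊕ Fin g) ℤ) *ᵥ z)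
          = Sum.elim (fun i => z (Sum.inr i) % d) (-(z ∘ Sum.inl)) := by
        rw [hz2, Jm, Matrix.fromBlocks_mulVec]
        simp [Matrix.neg_mulVec]
      obtain ⟨LN, hLN1, hLN2, _⟩ := good_lower S hSs
      obtain ⟨JN, hJN1, hJN2, _⟩ := good_J (g := g)
      have hinv : (LN * JN) * (Jm g * Matrix.fromBlocks 1 0 S 1) = 1 := by
        rw [mul_assoc, ← mul_assoc JN, hJN2, one_mul, hLN2]
      have hz₃gcd : Finset.univ.gcd (Sum.elim (fun i => z (Sum.inr i) % d) (-(z ∘ Sum.inl))) = 1 := by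
        rw [← hz3, Matrix.mulVec_mulVec]
        exact gcd_mulVec_eq_one hinv hz
      have hb'ex : ∃ i, z (Sum.inr i) % d ≠ 0 := by
        by_contra hcon
        push_neg at hcon
        have hdvd : d ∣ 1 := by
          rw [← hz]
          apply Finset.dvd_gcd
          rintro (i | i) _
          · rw [show z (Sum.inl i) = d * a₁ i from ha₁ i (Finset.mem_univ i)]
            exact Dvd.intro _ rfl
          · exact Int.dvd_of_emod_eq_zero (hcon i)
        have := Int.le_of_dvd one_pos hdvd
        omega
      obtain ⟨i₁, hi₁⟩ := hb'ex
      have hdpos : 0 < d := by omega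
      have hmodnn : 0 ≤ z (Sum.inr i₁) % d := Int.emod_nonneg _ (by omega)
      have hmodlt : z (Sum.inr i₁) % d < d := Int.emod_lt_of_pos _ hdpos
      have hd₃ : (Finset.univ.gcd ((Sum.elim (fun i => z (Sum.inr i) % d) (-(z ∘ Sum.inl)) : Fin g ⊕ Fin g → ℤ) ∘ Sum.inl)).natAbs ≤ n := by
        rw [Sum.elim_comp_inl]
        have hdvd3 : Finset.univ.gcd (fun i => z (Sum.inr i) % d) ∣ z (Sum.inr i₁) % d :=
          Finset.gcd_dvd (Finset.mem_univ i₁)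
        have h3nn : 0 ≤ Finset.univ.gcd (fun i => z (Sum.inr i) % d) := gcd_nonneg'
        have hle3 : Finset.univ.gcd (fun i => z (Sum.inr i) % d) ≤ z (Sum.inr i₁) % d :=
          Int.le_of_dvd (lt_of_le_of_ne hmodnn (Ne.symm hi₁)) hdvd3
        have := Int.natAbs_of_nonneg h3nn
        omega
      obtain ⟨G₃, hG₃, hG₃v⟩ := ih _ hz₃gcd hd₃
      refine ⟨G₃ * (Jm g * Matrix.fromBlocks 1 0 S 1),
        hG₃.mul (good_J.mul (good_lower S hSs)), ?_⟩
      rw [← Matrix.mulVec_mulVec, ← Matrix.mulVec_mulVec, hz3]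
      exact hG₃v

end SympExtAux

open Matrix in
theorem primitive_extends_to_symplectic_basis (g : ℕ)
    (J : Matrix (Fin g ⊕ Fin g) (Fin g ⊕ Fin g) ℤ)
    (hJ : J = Matrix.fromBlocks 0 1 (-1) 0)
    (z : Fin g ⊕ Fin g → ℤ) (hz : z ≠ 0)
    (hprim : Finset.univ.gcd z = 1) :
    ∃ M : Matrix (Fin g ⊕ Fin g) (Fin g ⊕ Fin g) ℤ,
      IsUnit M.det ∧ Mᵀ * J * M = J ∧ ∃ i, (fun j => M j i) = z := by
  subst hJ
  have hg : g ≠ 0 := by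
    rintro rfl
    rw [Finset.univ_eq_empty, Finset.gcd_empty] at hprim
    exact absurd hprim (by decide)
  set i₀ : Fin g := ⟨0, Nat.pos_of_ne_zero hg⟩ with hi₀
  obtain ⟨G, ⟨N, hGN, hNG, hsymp⟩, hGv⟩ :=
    SympExtAux.main_lemma g i₀ (Finset.univ.gcd (z ∘ Sum.inl)).natAbs z hprim le_rfl
  have hNv : N *ᵥ (Pi.single (Sum.inl i₀) (1:ℤ)) = z := by
    rw [← hGv, Matrix.mulVec_mulVec, hNG, Matrix.one_mulVec]
  refine ⟨N, ?_, ?_, Sum.inl i₀, ?_⟩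
  · exact IsUnit.of_mul_eq_one _ (by rw [← Matrix.det_mul, hNG, Matrix.det_one])
  · show Nᵀ * SympExtAux.Jm g * N = SympExtAux.Jm g
    calc Nᵀ * SympExtAux.Jm g * N = Nᵀ * (Gᵀ * SympExtAux.Jm g * G) * N := by rw [hsymp]
      _ = (G * N)ᵀ * SympExtAux.Jm g * (G * N) := by rw [Matrix.transpose_mul]; noncomm_ring
      _ = SympExtAux.Jm g := by rw [hGN]; simp
  · rw [← hNv]
    funext j
    simp [Matrix.mulVec_single]
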